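/- arXiv:1805.10524 — 5 statements merged into one kernel-verified Lean document; each statement's English description precedes it below -/
import Mathlib

section
/- Let A be a commutative unital associative real algebra on R^n, U ⊆ R^k open, φ : U → A differentiable. If f, g : U → A are φA-differentiable with derivatives f'_φ and g'_φ, then the pointwise A-product f·g is φA-differentiable with derivative f'_φ·g + f·g'_φ (Leibniz rule). -/
/-- Leibniz rule for the φA-derivative. -/
theorem stmt_2 {k : ℕ} {A : Type*} [NormedCommRing A] [NormedAlgebra ℝ A]
    (U : Set (EuclideanSpace ℝ (Fin k))) (hU : IsOpen U)
    (φ f g : EuclideanSpace ℝ (Fin k) → A) (f' g' : EuclideanSpace ℝ (Fin k) → A)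
    (hφ : DifferentiableOn ℝ φ U)
    (hf : DifferentiableOn ℝ f U)
    (hg : DifferentiableOn ℝ g U)
    (hf' : ∀ u ∈ U, ∀ ξ, fderiv ℝ f u ξ = f' u * fderiv ℝ φ u ξ)
    (hg' : ∀ u ∈ U, ∀ ξ, fderiv ℝ g u ξ = g' u * fderiv ℝ φ u ξ) :
    DifferentiableOn ℝ (fun u => f u * g u) U ∧
      ∀ u ∈ U, ∀ ξ, fderiv ℝ (fun u => f u * g u) u ξ =
        (f' u * g u + f u * g' u) * fderiv ℝ φ u ξ := by
  refine ⟨hf.mul hg, fun u hu ξ => ?_⟩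
  have hfu : DifferentiableAt ℝ f u := (hf u hu).differentiableAt (hU.mem_nhds hu)
  have hgu : DifferentiableAt ℝ g u := (hg u hu).differentiableAt (hU.mem_nhds hu)
  have := fderiv_fun_mul hfu hgu
  rw [this]
  simp only [ContinuousLinearMap.add_apply, ContinuousLinearMap.smul_apply,
    ContinuousLinearMap.smulRight_apply, smul_eq_mul]
  rw [hf' u hu ξ, hg' u hu ξ]
  ring
end

section
/- Let A be a commutative unital associative real algebra on R^n, Ω ⊆ R^n open, g : Ω → A Lorch A-differentiable with A-derivative g' (i.e. dg_x(h) = g'(x)·h for all h ∈ A), U ⊆ R^k open, φ : U → A differentiable, f : U → A φA-differentiable with f(U) ⊆ Ω. Then g ∘ f is φA-differentiable with φA-derivative (g' ∘ f) · f'_φ. -/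
/-- chain rule: Lorch-differentiable after φA-differentiable. -/
theorem stmt_4 {k : ℕ} {A : Type*} [NormedCommRing A] [NormedAlgebra ℝ A]
    (Ω : Set A) (hΩ : IsOpen Ω) (g g' : A → A)
    (hgd : DifferentiableOn ℝ g Ω)
    (hg' : ∀ x ∈ Ω, ∀ h : A, fderiv ℝ g x h = g' x * h)
    (U : Set (EuclideanSpace ℝ (Fin k))) (hU : IsOpen U)
    (φ f : EuclideanSpace ℝ (Fin k) → A) (f' : EuclideanSpace ℝ (Fin k) → A)
    (hφ : DifferentiableOn ℝ φ U)
    (hf : DifferentiableOn ℝ f U)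
    (hf' : ∀ u ∈ U, ∀ ξ, fderiv ℝ f u ξ = f' u * fderiv ℝ φ u ξ)
    (him : Set.MapsTo f U Ω) :
    DifferentiableOn ℝ (g ∘ f) U ∧
      ∀ u ∈ U, ∀ ξ, fderiv ℝ (g ∘ f) u ξ = (g' (f u) * f' u) * fderiv ℝ φ u ξ := by
  have hfa : ∀ u ∈ U, DifferentiableAt ℝ f u := fun u hu =>
    (hf u hu).differentiableAt (hU.mem_nhds hu)
  have hga : ∀ u ∈ U, DifferentiableAt ℝ g (f u) := fun u hu =>
    (hgd (f u) (him hu)).differentiableAt (hΩ.mem_nhds (him hu))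
  constructor
  · intro u hu
    exact (((hga u hu).comp u (hfa u hu)).differentiableWithinAt)
  · intro u hu ξ
    rw [fderiv_comp u (hga u hu) (hfa u hu)]
    simp only [ContinuousLinearMap.coe_comp', Function.comp_apply]
    rw [hg' (f u) (him hu), hf' u hu, mul_assoc]
end

section
/- Let A be a commutative unital associative real algebra on R^n with first fundamental representation R : A → M(n,R) (the injective algebra homomorphism sending a to the matrix of multiplication by a). Let U ⊆ R^n be open and φ : U → R^n a diffeomorphism onto its image. Then the following are equivalent for a differentiable f : U → R^n: (a) f is φA-differentiable on U; (b) g = f ∘ φ^{-1} is Lorch A-differentiable on φ(U); (c) for all u ∈ U, the matrix Jf_u (Jφ_u)^{-1} belongs to the image R(A), where Jf and Jφ denote Jacobian matrices. -/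
/-- equivalence of (a) φA-differentiability, (b) Lorch
A-differentiability of f ∘ φ⁻¹, and (c) Jf_u (Jφ_u)⁻¹ ∈ R(A). -/
theorem stmt_6 {A : Type*} [NormedCommRing A] [NormedAlgebra ℝ A]
    (U : Set A) (hU : IsOpen U)
    (φ φinv : A → A)
    (hφ : DifferentiableOn ℝ φ U)
    (hopen : IsOpen (φ '' U))
    (hinv : DifferentiableOn ℝ φinv (φ '' U))
    (hleft : ∀ u ∈ U, φinv (φ u) = u)
    (hright : ∀ p ∈ φ '' U, φ (φinv p) = p)
    (f : A → A) (hf : DifferentiableOn ℝ f U) :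
    ((∃ f' : A → A, ∀ u ∈ U, ∀ ξ : A, fderiv ℝ f u ξ = f' u * fderiv ℝ φ u ξ) ↔
      (DifferentiableOn ℝ (f ∘ φinv) (φ '' U) ∧
        ∃ g' : A → A, ∀ p ∈ φ '' U, ∀ h : A, fderiv ℝ (f ∘ φinv) p h = g' p * h)) ∧
    ((∃ f' : A → A, ∀ u ∈ U, ∀ ξ : A, fderiv ℝ f u ξ = f' u * fderiv ℝ φ u ξ) ↔
      (∀ u ∈ U, ∃ a : A, ∀ ξ : A,
        fderiv ℝ f u (fderiv ℝ φinv (φ u) ξ) = a * ξ)) := by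
  have hmem : ∀ u ∈ U, φ u ∈ φ '' U := fun u hu => ⟨u, hu, rfl⟩
  have hφat : ∀ u ∈ U, DifferentiableAt ℝ φ u :=
    fun u hu => (hφ u hu).differentiableAt (hU.mem_nhds hu)
  have hfat : ∀ u ∈ U, DifferentiableAt ℝ f u :=
    fun u hu => (hf u hu).differentiableAt (hU.mem_nhds hu)
  have hinvat : ∀ p ∈ φ '' U, DifferentiableAt ℝ φinv p :=
    fun p hp => (hinv p hp).differentiableAt (hopen.mem_nhds hp)
  -- E ∘ D = id
  have hED : ∀ u ∈ U, ∀ ξ : A, fderiv ℝ φinv (φ u) (fderiv ℝ φ u ξ) = ξ := by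
    intro u hu ξ
    have h1 : (φinv ∘ φ) =ᶠ[nhds u] id := by
      filter_upwards [hU.mem_nhds hu] with x hx using hleft x hx
    have h2 : fderiv ℝ (φinv ∘ φ) u = fderiv ℝ id u := h1.fderiv_eq
    rw [fderiv_comp u (hinvat _ (hmem u hu)) (hφat u hu), fderiv_id] at h2
    have := congrArg (fun L => L ξ) h2
    simpa [hleft u hu] using this
  -- D ∘ E = id
  have hDE : ∀ u ∈ U, ∀ ξ : A, fderiv ℝ φ u (fderiv ℝ φinv (φ u) ξ) = ξ := by
    intro u hu ξ
    have h1 : (φ ∘ φinv) =ᶠ[nhds (φ u)] id := by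
      filter_upwards [hopen.mem_nhds (hmem u hu)] with x hx using hright x hx
    have h2 : fderiv ℝ (φ ∘ φinv) (φ u) = fderiv ℝ id (φ u) := h1.fderiv_eq
    rw [fderiv_comp (φ u) (by rw [hleft u hu]; exact hφat u hu)
      (hinvat _ (hmem u hu)), fderiv_id, hleft u hu] at h2
    have := congrArg (fun L => L ξ) h2
    simpa using this
  -- chain rule for g = f ∘ φinv at φ u
  have hchain : ∀ u ∈ U, ∀ ξ : A,
      fderiv ℝ (f ∘ φinv) (φ u) ξ = fderiv ℝ f u (fderiv ℝ φinv (φ u) ξ) := by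
    intro u hu ξ
    rw [fderiv_comp (φ u) (by rw [hleft u hu]; exact hfat u hu) (hinvat _ (hmem u hu)),
      hleft u hu]
    rfl
  -- chain rule for f = g ∘ φ at u
  have hchain' : ∀ u ∈ U, ∀ ξ : A,
      fderiv ℝ f u ξ = fderiv ℝ (f ∘ φinv) (φ u) (fderiv ℝ φ u ξ) := by
    intro u hu ξ
    have h1 : f =ᶠ[nhds u] ((f ∘ φinv) ∘ φ) := by
      filter_upwards [hU.mem_nhds hu] with x hx
      simp [Function.comp, hleft x hx]
    have hg : DifferentiableAt ℝ (f ∘ φinv) (φ u) :=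
      DifferentiableAt.comp (φ u) (by rw [hleft u hu]; exact hfat u hu)
        (hinvat _ (hmem u hu))
    have h2 : fderiv ℝ f u = fderiv ℝ ((f ∘ φinv) ∘ φ) u := h1.fderiv_eq
    rw [h2, fderiv_comp u hg (hφat u hu)]
    rfl
  constructor
  · constructor
    · rintro ⟨f', hf'⟩
      constructor
      · exact hf.comp hinv (fun p hp => by
          obtain ⟨x, hx, rfl⟩ := hp; rw [hleft x hx]; exact hx)
      · refine ⟨fun p => f' (φinv p), ?_⟩
        rintro p ⟨u, hu, rfl⟩ h
        rw [hchain u hu h, hf' u hu, hDE u hu]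
        show f' u * h = f' (φinv (φ u)) * h
        rw [hleft u hu]
    · rintro ⟨_, g', hg'⟩
      refine ⟨fun u => g' (φ u), fun u hu ξ => ?_⟩
      rw [hchain' u hu ξ, hg' (φ u) (hmem u hu)]
  · constructor
    · rintro ⟨f', hf'⟩ u hu
      exact ⟨f' u, fun ξ => by rw [hf' u hu, hDE u hu]⟩
    · intro hc
      classical
      refine ⟨fun u => if h : u ∈ U then (hc u h).choose else 0, fun u hu ξ => ?_⟩
      have := (hc u hu).choose_spec (fderiv ℝ φ u ξ)
      rw [hED u hu] at this
      rw [this]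
      show _ = (if h : u ∈ U then (hc u h).choose else 0) * fderiv ℝ φ u ξ
      rw [dif_pos hu]
end

section
/- Let A be a commutative unital associative real algebra on R^n, U ⊆ R^k open with k ≥ 2, φ : U → A differentiable, and f : U → A φA-differentiable. Then for all 1 ≤ i, j ≤ k and all u ∈ U, the generalized Cauchy–Riemann equations hold: dφ_u(e_j) · ∂f/∂u_i (u) = dφ_u(e_i) · ∂f/∂u_j (u), where e_1,…,e_k is the standard basis of R^k, ∂f/∂u_i denotes the partial derivative of f in direction e_i, and · is the product in A. -/
/-- φA-differentiability implies the generalized Cauchy-Riemann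
equations dφ(e_j) · f_{u_i} = dφ(e_i) · f_{u_j}. -/
theorem stmt_8 {k : ℕ} {A : Type*} [NormedCommRing A] [NormedAlgebra ℝ A]
    (hk : 2 ≤ k)
    (U : Set (EuclideanSpace ℝ (Fin k))) (hU : IsOpen U)
    (φ f : EuclideanSpace ℝ (Fin k) → A) (f' : EuclideanSpace ℝ (Fin k) → A)
    (hφ : DifferentiableOn ℝ φ U)
    (hf : DifferentiableOn ℝ f U)
    (hf' : ∀ u ∈ U, ∀ ξ, fderiv ℝ f u ξ = f' u * fderiv ℝ φ u ξ) :
    ∀ u ∈ U, ∀ i j : Fin k,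
      fderiv ℝ φ u (EuclideanSpace.single j (1 : ℝ)) *
          fderiv ℝ f u (EuclideanSpace.single i (1 : ℝ)) =
        fderiv ℝ φ u (EuclideanSpace.single i (1 : ℝ)) *
          fderiv ℝ f u (EuclideanSpace.single j (1 : ℝ)) := by
  intro u hu i j
  rw [hf' u hu, hf' u hu]
  ring
end

section
/- Let A be a commutative unital associative real algebra on R^n, U ⊆ R^k open with k ≥ 2, φ : U → A differentiable, and f : U → A differentiable in the usual sense. Suppose that for every u ∈ U there exists ξ_u ∈ R^k with ‖ξ_u‖ = 1 such that dφ_u(ξ_u) is a regular element of A. If f satisfies the generalized Cauchy–Riemann equations dφ_u(e_j)·∂f/∂u_i(u) = dφ_u(e_i)·∂f/∂u_j(u) for all 1 ≤ i, j ≤ k and all u ∈ U, then f is φA-differentiable on U, with φA-derivative f'_φ(u) = (∂f/∂ξ_u)(u) · (dφ_u(ξ_u))^{-1} where ∂f/∂ξ_u = df_u(ξ_u). -/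
/-- generalized Cauchy-Riemann equations plus a regular direction
imply φA-differentiability, with the stated formula for the derivative. -/
theorem stmt_9 {k : ℕ} {A : Type*} [NormedCommRing A] [NormedAlgebra ℝ A]
    (hk : 2 ≤ k)
    (U : Set (EuclideanSpace ℝ (Fin k))) (hU : IsOpen U)
    (φ f : EuclideanSpace ℝ (Fin k) → A)
    (hφ : DifferentiableOn ℝ φ U)
    (hf : DifferentiableOn ℝ f U)
    (hreg : ∀ u ∈ U, ∃ ξ, ‖ξ‖ = 1 ∧ IsUnit (fderiv ℝ φ u ξ))
    (hCRE : ∀ u ∈ U, ∀ i j : Fin k,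
      fderiv ℝ φ u (EuclideanSpace.single j (1 : ℝ)) *
          fderiv ℝ f u (EuclideanSpace.single i (1 : ℝ)) =
        fderiv ℝ φ u (EuclideanSpace.single i (1 : ℝ)) *
          fderiv ℝ f u (EuclideanSpace.single j (1 : ℝ))) :
    ∀ u ∈ U, ∀ ξ, ‖ξ‖ = 1 → IsUnit (fderiv ℝ φ u ξ) →
      ∀ η, fderiv ℝ f u η =
        (fderiv ℝ f u ξ * Ring.inverse (fderiv ℝ φ u ξ)) * fderiv ℝ φ u η := by
  intro u hu ξ hξnorm hξ η
  set L := fderiv ℝ φ u with hL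
  set M := fderiv ℝ f u with hM
  have hv : ∀ v : EuclideanSpace ℝ (Fin k),
      v = ∑ i, (v i) • EuclideanSpace.single i (1 : ℝ) := by
    intro v
    have := (EuclideanSpace.basisFun (Fin k) ℝ).sum_repr v
    simpa [EuclideanSpace.basisFun_apply, EuclideanSpace.basisFun_repr] using this.symm
  have key : ∀ v w : EuclideanSpace ℝ (Fin k), L v * M w = L w * M v := by
    intro v w
    calc L v * M w
        = (∑ i, (v i) • L (EuclideanSpace.single i (1 : ℝ))) *
            (∑ j, (w j) • M (EuclideanSpace.single j (1 : ℝ))) := by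
          conv_lhs => rw [hv v, hv w]
          simp [map_sum, map_smul]
      _ = ∑ i, ∑ j, (v i * w j) •
            (L (EuclideanSpace.single i (1 : ℝ)) * M (EuclideanSpace.single j (1 : ℝ))) := by
          rw [Finset.sum_mul_sum]
          congr 1; ext i; congr 1; ext j
          rw [smul_mul_assoc, mul_smul_comm, smul_smul]
      _ = ∑ i, ∑ j, (v i * w j) •
            (L (EuclideanSpace.single j (1 : ℝ)) * M (EuclideanSpace.single i (1 : ℝ))) := by
          congr 1; ext i; congr 1; ext j
          rw [hCRE u hu i j]
      _ = ∑ j, ∑ i, (v i * w j) •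
            (L (EuclideanSpace.single j (1 : ℝ)) * M (EuclideanSpace.single i (1 : ℝ))) :=
          Finset.sum_comm
      _ = L w * M v := by
          conv_rhs => rw [hv v, hv w]
          rw [map_sum, map_sum, Finset.sum_mul_sum]
          congr 1; ext j; congr 1; ext i
          rw [map_smul, map_smul, smul_mul_assoc, mul_smul_comm, smul_smul, mul_comm (w j)]
  have h := key ξ η
  have hinv : Ring.inverse (L ξ) * L ξ = 1 := Ring.inverse_mul_cancel _ hξ
  calc M η = 1 * M η := (one_mul _).symm
    _ = Ring.inverse (L ξ) * L ξ * M η := by rw [hinv]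
    _ = Ring.inverse (L ξ) * (L ξ * M η) := by ring
    _ = Ring.inverse (L ξ) * (L η * M ξ) := by rw [h]
    _ = (M ξ * Ring.inverse (L ξ)) * L η := by ring
end
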